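/- Let w be a fully commutative element of W(affine A_{n-1}), n ≥ 3, with w ≠ 1. Then at least one of the following holds: (i) w is a product of pairwise commuting generators; (ii) n is even and w is an alternating product of I_0 and I_1; (iii) w = stv reduced for some noncommuting generators s, t, and tv lies in the same left {s,t}-string as w (so that applying a left star operation decreases length); (iv) w = vts reduced for some noncommuting generators s, t with the analogous right-handed property. -/

import Mathlib

open Polynomial

/-- Bruhat order on a Coxeter group, via the subword property: `x ≤ w` iff some
reduced word for `w` has a subword whose product is `x`. -/
def BruhatLE {B W : Type*} {M : CoxeterMatrix B} [Group W] (cs : CoxeterSystem M W)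
    (x w : W) : Prop :=
  ∃ ω : List B, cs.IsReduced ω ∧ cs.wordProd ω = w ∧
    ∃ ω' : List B, ω'.Sublist ω ∧ cs.wordProd ω' = x

/-- Strict Bruhat order. -/
def BruhatLT {B W : Type*} {M : CoxeterMatrix B} [Group W] (cs : CoxeterSystem M W)
    (x w : W) : Prop :=
  BruhatLE cs x w ∧ x ≠ w

/-- `w` is fully commutative (Stembridge): no reduced expression for `w` contains a
factor `s t s` with `s, t` noncommuting generators with `m(s,t) = 3`. -/
def FullyCommutative {B W : Type*} {M : CoxeterMatrix B} [Group W] (cs : CoxeterSystem M W)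
    (w : W) : Prop :=
  ∀ ω : List B, cs.IsReduced ω → cs.wordProd ω = w →
    ¬ ∃ (l₁ l₂ : List B) (i j : B), M i j = 3 ∧ ω = l₁ ++ [i, j, i] ++ l₂
/-- `M` is the Coxeter matrix of type affine `A_{n-1}`, with generators indexed by
`ZMod n`: `m(i,i) = 1`, `m(i,j) = 3` if `i - j ≡ ±1 (mod n)`, and `m(i,j) = 2`
otherwise. -/
def IsAffineAMatrix (n : ℕ) (M : CoxeterMatrix (ZMod n)) : Prop :=
  ∀ i j : ZMod n, M i j = if i = j then 1 else if i = j + 1 ∨ j = i + 1 then 3 else 2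
/-- The set `S_0` (for `b = false`) resp. `S_1` (for `b = true`) of generators of
even resp. odd index in type affine `A_{n-1}`. -/
def parityGenSet (n : ℕ) (b : Bool) : Set (ZMod n) :=
  {i : ZMod n | ∃ k : ℕ, k < n ∧ k % 2 = b.toNat ∧ (k : ZMod n) = i}

/-- The element `I_0` (for `b = false`) resp. `I_1` (for `b = true`): the product of
the pairwise commuting generators of even resp. odd index. -/
def Iprod {n : ℕ} {W : Type*} {M : CoxeterMatrix (ZMod n)} [Group W]
    (cs : CoxeterSystem M W) (b : Bool) : W :=
  cs.wordProd (((List.range n).filter (fun k => k % 2 = b.toNat)).map (Nat.cast))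

/-- The alternating product `I_b I_{!b} I_b ⋯` with `k` factors. -/
def altProd {n : ℕ} {W : Type*} {M : CoxeterMatrix (ZMod n)} [Group W]
    (cs : CoxeterSystem M W) : Bool → ℕ → W
  | _, 0 => 1
  | b, k + 1 => Iprod cs b * altProd cs (!b) k



open List

namespace FG

/-- adjacency-or-equality relation on generators of affine A_{n-1} -/
def sim {n : ℕ} (i j : ZMod n) : Prop := i = j ∨ i = j + 1 ∨ j = i + 1

instance {n : ℕ} (i j : ZMod n) : Decidable (sim i j) := by
  unfold sim; infer_instance

lemma sim_comm {n : ℕ} {i j : ZMod n} : sim i j ↔ sim j i := by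
  unfold sim; tauto

lemma sim_refl {n : ℕ} (i : ZMod n) : sim i i := Or.inl rfl

lemma sim_symmetric {n : ℕ} : Symmetric (fun u v : ZMod n => ¬ sim u v) :=
  fun _ _ h hs => h (sim_comm.mp hs)

section basic

variable {n : ℕ} {W : Type*} {M : CoxeterMatrix (ZMod n)} [Group W]

lemma one_ne_zero' (hn : 3 ≤ n) : (1 : ZMod n) ≠ 0 := by
  haveI : NeZero n := ⟨by omega⟩
  haveI : Fact (1 < n) := ⟨by omega⟩
  intro h
  have := congrArg ZMod.val h
  rw [ZMod.val_one, ZMod.val_zero] at this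
  omega

lemma ne_add_one (hn : 3 ≤ n) (x : ZMod n) : x ≠ x + 1 := by
  intro h
  have : (0 : ZMod n) = 1 := by
    have := congrArg (fun y => y - x) h
    simpa using this
  exact one_ne_zero' hn this.symm

lemma M_eq_three_iff (hn : 3 ≤ n) (hM : IsAffineAMatrix n M) (i j : ZMod n) :
    M i j = 3 ↔ (i = j + 1 ∨ j = i + 1) := by
  rw [hM i j]
  constructor
  · intro h
    split_ifs at h with h1 h2
    · omega
    · exact h2
    · omega
  · intro h
    have hij : i ≠ j := by
      rcases h with h | h
      · rw [h]; exact (ne_add_one hn j).symm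
      · rw [h]; exact ne_add_one hn i
    rw [if_neg hij, if_pos h]

lemma M_eq_two (hn : 3 ≤ n) (hM : IsAffineAMatrix n M) {i j : ZMod n} (h : ¬ sim i j) :
    M i j = 2 := by
  rw [hM i j]
  unfold sim at h
  push_neg at h
  rw [if_neg h.1, if_neg (by push_neg; exact ⟨h.2.1, h.2.2⟩)]

lemma commute_of_not_sim (hn : 3 ≤ n) (hM : IsAffineAMatrix n M) (cs : CoxeterSystem M W)
    {i j : ZMod n} (h : ¬ sim i j) : Commute (cs.simple i) (cs.simple j) := by
  have h2 : (cs.simple i * cs.simple j) ^ 2 = 1 := by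
    have := cs.simple_mul_simple_pow i j
    rwa [M_eq_two hn hM h] at this
  have h2' : cs.simple i * cs.simple j * (cs.simple i * cs.simple j) = 1 := by
    rw [← pow_two]; exact h2
  unfold Commute SemiconjBy
  have : cs.simple i * cs.simple j = (cs.simple i * cs.simple j)⁻¹ := by
    rw [eq_inv_iff_mul_eq_one]; exact h2'
  rw [mul_inv_rev, cs.inv_simple, cs.inv_simple] at this
  exact this.symm ▸ this ▸ rfl

end basic

end FG

namespace FG

section split

variable {n : ℕ}

/-- split a word into (minimal letters, rest), where a letter is minimal if no
earlier letter (including `seen`) is equal or adjacent to it. -/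
def splitM : List (ZMod n) → List (ZMod n) → List (ZMod n) × List (ZMod n)
  | _, [] => ([], [])
  | seen, a :: t =>
    if ∀ x ∈ seen, ¬ sim x a
    then (a :: (splitM (a :: seen) t).1, (splitM (a :: seen) t).2)
    else ((splitM (a :: seen) t).1, a :: (splitM (a :: seen) t).2)

lemma splitM_len : ∀ (l seen : List (ZMod n)),
    (splitM seen l).1.length + (splitM seen l).2.length = l.length := by
  intro l
  induction l with
  | nil => intro seen; simp [splitM]
  | cons a t ih =>
    intro seen
    by_cases h : ∀ x ∈ seen, ¬ sim x a
    · simp only [splitM, if_pos h, List.length_cons]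
      have := ih (a :: seen); omega
    · simp only [splitM, if_neg h, List.length_cons]
      have := ih (a :: seen); omega

lemma splitM_ne_nil {l : List (ZMod n)} (h : l ≠ []) : (splitM [] l).1 ≠ [] := by
  cases l with
  | nil => exact absurd rfl h
  | cons a t =>
    simp only [splitM, if_pos (by simp : ∀ x ∈ ([] : List (ZMod n)), ¬ sim x a)]
    simp

/-- members of the minimal part are not sim to anything in `seen` -/
lemma splitM_not_sim_seen : ∀ (l seen : List (ZMod n)) (y : ZMod n),
    y ∈ (splitM seen l).1 → ∀ s ∈ seen, ¬ sim s y := by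
  intro l
  induction l with
  | nil => intro seen y hy; simp [splitM] at hy
  | cons a t ih =>
    intro seen y hy s hs
    by_cases h : ∀ x ∈ seen, ¬ sim x a
    · simp only [splitM, if_pos h, List.mem_cons] at hy
      rcases hy with rfl | hy
      · exact h s hs
      · exact ih (a :: seen) y hy s (List.mem_cons_of_mem _ hs)
    · simp only [splitM, if_neg h] at hy
      exact ih (a :: seen) y hy s (List.mem_cons_of_mem _ hs)

lemma splitM_pairwise : ∀ (l seen : List (ZMod n)),
    (splitM seen l).1.Pairwise (fun u v => ¬ sim u v) := by
  intro l
  induction l with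
  | nil => intro seen; simp [splitM]
  | cons a t ih =>
    intro seen
    by_cases h : ∀ x ∈ seen, ¬ sim x a
    · simp only [splitM, if_pos h]
      refine List.Pairwise.cons ?_ (ih (a :: seen))
      intro y hy
      exact splitM_not_sim_seen t (a :: seen) y hy a (List.mem_cons_self)
    · simp only [splitM, if_neg h]
      exact ih (a :: seen)

lemma splitM_mono : ∀ (l seen₁ seen₂ : List (ZMod n)),
    (∀ s ∈ seen₂, s ∈ seen₁) → ∀ f, f ∈ (splitM seen₁ l).1 → f ∈ (splitM seen₂ l).1 := by
  intro l
  induction l with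
  | nil => intro _ _ _ f hf; simp [splitM] at hf
  | cons a t ih =>
    intro seen₁ seen₂ hsub f hf
    have hsub' : ∀ s ∈ (a :: seen₂), s ∈ (a :: seen₁) := by
      intro s hs
      rcases List.mem_cons.mp hs with rfl | hs
      · exact List.mem_cons_self
      · exact List.mem_cons_of_mem _ (hsub s hs)
    by_cases h1 : ∀ x ∈ seen₁, ¬ sim x a
    · simp only [splitM, if_pos h1, List.mem_cons] at hf
      have h2 : ∀ x ∈ seen₂, ¬ sim x a := fun x hx => h1 x (hsub x hx)
      simp only [splitM, if_pos h2, List.mem_cons]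
      rcases hf with rfl | hf
      · exact Or.inl rfl
      · exact Or.inr (ih _ _ hsub' f hf)
    · simp only [splitM, if_neg h1] at hf
      by_cases h2 : ∀ x ∈ seen₂, ¬ sim x a
      · simp only [splitM, if_pos h2, List.mem_cons]
        exact Or.inr (ih _ _ hsub' f hf)
      · simp only [splitM, if_neg h2]
        exact ih _ _ hsub' f hf

/-- decomposition of a word at a minimal letter: everything before it is non-sim. -/
lemma splitM_min_decomp : ∀ (l seen : List (ZMod n)) (f : ZMod n),
    f ∈ (splitM seen l).1 →
    ∃ C D, l = C ++ f :: D ∧ (∀ y ∈ C, ¬ sim y f) ∧ (∀ s ∈ seen, ¬ sim s f) := by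
  intro l
  induction l with
  | nil => intro seen f hf; simp [splitM] at hf
  | cons a t ih =>
    intro seen f hf
    by_cases h : ∀ x ∈ seen, ¬ sim x a
    · simp only [splitM, if_pos h, List.mem_cons] at hf
      rcases hf with rfl | hf
      · exact ⟨[], t, rfl, by simp, h⟩
      · obtain ⟨C, D, rfl, hC, hseen⟩ := ih (a :: seen) f hf
        exact ⟨a :: C, D, rfl,
          by intro y hy; rcases List.mem_cons.mp hy with rfl | hy
             · exact hseen y (List.mem_cons_self)
             · exact hC y hy,
          fun s hs => hseen s (List.mem_cons_of_mem _ hs)⟩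
    · simp only [splitM, if_neg h] at hf
      obtain ⟨C, D, rfl, hC, hseen⟩ := ih (a :: seen) f hf
      exact ⟨a :: C, D, rfl,
        by intro y hy; rcases List.mem_cons.mp hy with rfl | hy
           · exact hseen y (List.mem_cons_self)
           · exact hC y hy,
        fun s hs => hseen s (List.mem_cons_of_mem _ hs)⟩

/-- every minimal letter of the rest has a sim-blocker among seen or the minimal part -/
lemma splitM_blocker : ∀ (l seen : List (ZMod n)) (f : ZMod n),
    f ∈ (splitM [] (splitM seen l).2).1 →
    ∃ s, (s ∈ seen ∨ s ∈ (splitM seen l).1) ∧ sim s f := by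
  intro l
  induction l with
  | nil => intro seen f hf; simp [splitM] at hf
  | cons a t ih =>
    intro seen f hf
    by_cases h : ∀ x ∈ seen, ¬ sim x a
    · simp only [splitM, if_pos h] at hf ⊢
      obtain ⟨s, hs, hsim⟩ := ih (a :: seen) f hf
      rcases hs with hs | hs
      · rcases List.mem_cons.mp hs with rfl | hs
        · exact ⟨s, Or.inr (List.mem_cons_self), hsim⟩
        · exact ⟨s, Or.inl hs, hsim⟩
      · exact ⟨s, Or.inr (List.mem_cons_of_mem _ hs), hsim⟩
    · simp only [splitM, if_neg h] at hf ⊢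
      rw [if_pos (show ∀ x ∈ ([] : List (ZMod n)), ¬ sim x a by simp)] at hf
      rcases List.mem_cons.mp hf with rfl | hf
      · push_neg at h
        obtain ⟨x, hx, hsim⟩ := h
        exact ⟨x, Or.inl hx, not_not.mp (by simpa using hsim)⟩
      · have hnsa : ¬ sim a f :=
          splitM_not_sim_seen _ [a] f hf a (List.mem_cons_self)
        have hf' : f ∈ (splitM [] (splitM (a :: seen) t).2).1 :=
          splitM_mono _ [a] [] (by simp) f hf
        obtain ⟨s, hs, hsim⟩ := ih (a :: seen) f hf'
        rcases hs with hs | hs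
        · rcases List.mem_cons.mp hs with rfl | hs
          · exact absurd hsim hnsa
          · exact ⟨s, Or.inl hs, hsim⟩
        · exact ⟨s, Or.inr hs, hsim⟩

end split

end FG

namespace FG

section words

variable {n : ℕ} {W : Type*} {M : CoxeterMatrix (ZMod n)} [Group W]
variable (hn : 3 ≤ n) (hM : IsAffineAMatrix n M) (cs : CoxeterSystem M W)

lemma exists_mem_split_first {α : Type*} {a : α} {l : List α} (h : a ∈ l) :
    ∃ s t, l = s ++ a :: t ∧ a ∉ s := by
  classical
  induction l with
  | nil => simp at h
  | cons b t ih =>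
    by_cases hb : a = b
    · exact ⟨[], t, by rw [hb]; rfl, by simp⟩
    · rcases List.mem_cons.mp h with h' | h'
      · exact absurd h' hb
      · obtain ⟨s, t', rfl, hs⟩ := ih h'
        exact ⟨b :: s, t', rfl, by simp [hs, Ne.symm, hb]⟩

include hn hM

/-- a `Good` word: a reduced word for `w`. -/
def Good (w : W) (l : List (ZMod n)) : Prop := cs.IsReduced l ∧ cs.wordProd l = w

omit hn hM in
lemma Good.transfer {w : W} {l l' : List (ZMod n)} (h : Good cs w l)
    (hp : cs.wordProd l' = cs.wordProd l) (hl : l'.length = l.length) : Good cs w l' := by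
  refine ⟨?_, hp.trans h.2⟩
  unfold CoxeterSystem.IsReduced
  rw [hp, hl]
  exact h.1

lemma commute_wordProd {a : ZMod n} {l : List (ZMod n)} (h : ∀ y ∈ l, ¬ sim a y) :
    Commute (cs.simple a) (cs.wordProd l) := by
  unfold CoxeterSystem.wordProd
  apply Commute.list_prod_right
  intro y hy
  obtain ⟨b, hb, rfl⟩ := List.mem_map.mp hy
  exact commute_of_not_sim hn hM cs (h b hb)

/-- the fundamental swap: a letter commutes past a block of non-sim letters -/
lemma prod_swap {a : ZMod n} {x mid z : List (ZMod n)} (h : ∀ y ∈ mid, ¬ sim a y) :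
    cs.wordProd (x ++ [a] ++ mid ++ z) = cs.wordProd (x ++ mid ++ [a] ++ z) := by
  have hc := commute_wordProd hn hM cs h
  simp only [cs.wordProd_append]
  rw [show cs.wordProd [a] = cs.simple a by simp [cs.wordProd_cons]]
  rw [mul_assoc (cs.wordProd x), mul_assoc (cs.wordProd x), hc.eq]
  group

lemma splitM_prod : ∀ (l seen x : List (ZMod n)),
    cs.wordProd (x ++ l) = cs.wordProd (x ++ (splitM seen l).1 ++ (splitM seen l).2) := by
  intro l
  induction l with
  | nil => intro seen x; simp [splitM]
  | cons a t ih =>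
    intro seen x
    by_cases h : ∀ x' ∈ seen, ¬ sim x' a
    · simp only [splitM, if_pos h]
      have := ih (a :: seen) (x ++ [a])
      calc cs.wordProd (x ++ a :: t) = cs.wordProd ((x ++ [a]) ++ t) := by
            simp [List.append_assoc]
        _ = cs.wordProd ((x ++ [a]) ++ (splitM (a :: seen) t).1 ++ (splitM (a :: seen) t).2) :=
            this
        _ = cs.wordProd (x ++ a :: (splitM (a :: seen) t).1 ++ (splitM (a :: seen) t).2) := by
            simp [List.append_assoc]
    · simp only [splitM, if_neg h]
      have hns : ∀ y ∈ (splitM (a :: seen) t).1, ¬ sim a y := fun y hy =>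
        splitM_not_sim_seen t (a :: seen) y hy a (List.mem_cons_self)
      have hswap := prod_swap hn hM cs (x := x) (z := (splitM (a :: seen) t).2) hns
      calc cs.wordProd (x ++ a :: t) = cs.wordProd ((x ++ [a]) ++ t) := by
            simp [List.append_assoc]
        _ = cs.wordProd ((x ++ [a]) ++ (splitM (a :: seen) t).1 ++ (splitM (a :: seen) t).2) :=
            ih (a :: seen) (x ++ [a])
        _ = cs.wordProd (x ++ [a] ++ (splitM (a :: seen) t).1 ++ (splitM (a :: seen) t).2) := by
            simp [List.append_assoc]
        _ = cs.wordProd (x ++ (splitM (a :: seen) t).1 ++ [a] ++ (splitM (a :: seen) t).2) :=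
            hswap
        _ = cs.wordProd (x ++ (splitM (a :: seen) t).1 ++ a :: (splitM (a :: seen) t).2) := by
            simp [List.append_assoc]

variable {w : W}

/-- two equal letters with nothing sim between them: impossible in a reduced word -/
lemma no_twin {f : ZMod n} {x g z : List (ZMod n)}
    (hG : Good cs w (x ++ [f] ++ g ++ [f] ++ z)) (h : ∀ y ∈ g, ¬ sim f y) : False := by
  have hswap := prod_swap hn hM cs (a := f) (x := x) (mid := g) (z := [f] ++ z) h
  have heq : cs.wordProd (x ++ g ++ [f] ++ ([f] ++ z)) = cs.wordProd (x ++ g ++ z) := by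
    simp only [cs.wordProd_append]
    rw [show cs.wordProd [f] = cs.simple f by simp [cs.wordProd_cons]]
    rw [mul_assoc (cs.wordProd x * cs.wordProd g), ← mul_assoc (cs.simple f),
      cs.simple_mul_simple_self]
    simp
  have h1 : cs.wordProd (x ++ [f] ++ g ++ [f] ++ z) = cs.wordProd (x ++ g ++ z) := by
    rw [show x ++ [f] ++ g ++ [f] ++ z = x ++ [f] ++ g ++ ([f] ++ z) by
      simp [List.append_assoc]] at *
    rw [hswap, heq]
  have hred := hG.1
  unfold CoxeterSystem.IsReduced at hred
  rw [h1] at hred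
  have := cs.length_wordProd_le (x ++ g ++ z)
  rw [hred] at this
  simp only [List.length_append, List.length_cons, List.length_nil] at this
  omega

/-- Key FC lemma: between two occurrences of `f` in a reduced word of the FC element
`w`, both neighbours `f+1` and `f-1` must occur. (one-sided version)-/
lemma neighbor_between (hw : FullyCommutative cs w) :
    ∀ (fuel : ℕ) (g : List (ZMod n)), g.length ≤ fuel →
    ∀ (x z : List (ZMod n)) (f ε : ZMod n), (ε = 1 ∨ ε = -1) →
    Good cs w (x ++ [f] ++ g ++ [f] ++ z) → f ∉ g → f + ε ∉ g → False := by
  intro fuel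
  induction fuel with
  | zero =>
    intro g hg x z f ε hε hG hf1 hf2
    have : g = [] := List.length_eq_zero_iff.mp (by omega)
    subst this
    exact no_twin hn hM cs hG (by simp)
  | succ fuel ih =>
    intro g hg x z f ε hε hG hf1 hf2
    have hset : ∀ y : ZMod n, sim f y → y = f ∨ y = f + ε ∨ y = f - ε := by
      intro y hy
      rcases hy with h | h | h
      · exact Or.inl h.symm
      · rcases hε with rfl | rfl
        · right; right; rw [h]; ring
        · right; left; rw [h]; ring
      · rcases hε with rfl | rfl
        · right; left; rw [h]
        · right; right; rw [h]; ring
    by_cases hm : (f - ε) ∈ g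
    · -- decompose at first occurrence of f - ε
      obtain ⟨g₁, g₂, rfl, hg₁⟩ := exists_mem_split_first hm
      by_cases h2 : (f - ε) ∈ g₂
      · obtain ⟨g₃, g₄, rfl, hg₃⟩ := exists_mem_split_first h2
        refine ih g₃ ?_ (x ++ [f] ++ g₁) (g₄ ++ [f] ++ z) (f - ε) ε hε ?_ hg₃ ?_
        · have := hg
          simp only [List.length_append, List.length_cons] at this ⊢
          omega
        · refine hG.transfer cs ?_ ?_ <;> simp [List.append_assoc]
        · intro hc
          rw [show f - ε + ε = f by ring] at hc
          exact hf1 (by simp [hc])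
      · -- single occurrence: create the pattern [f, f-ε, f]
        have hg₁' : ∀ y ∈ g₁, ¬ sim f y := by
          intro y hy hsim
          rcases hset y hsim with rfl | rfl | rfl
          · exact hf1 (by simp [hy])
          · exact hf2 (by simp [hy])
          · exact hg₁ hy
        have hg₂' : ∀ y ∈ g₂, ¬ sim f y := by
          intro y hy hsim
          rcases hset y hsim with rfl | rfl | rfl
          · exact hf1 (by simp [hy])
          · exact hf2 (by simp [hy])
          · exact h2 hy
        -- move first f right past g₁, second f left past g₂
        have e1 : cs.wordProd (x ++ [f] ++ (g₁ ++ (f - ε) :: g₂) ++ [f] ++ z)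
            = cs.wordProd (x ++ g₁ ++ [f] ++ ((f - ε) :: g₂ ++ [f] ++ z)) := by
          have := prod_swap hn hM cs (a := f) (x := x) (mid := g₁)
            (z := (f - ε) :: g₂ ++ [f] ++ z) hg₁'
          rw [← this]
          simp [List.append_assoc]
        have e2 : cs.wordProd ((x ++ g₁ ++ [f, f - ε]) ++ [f] ++ g₂ ++ z)
            = cs.wordProd ((x ++ g₁ ++ [f, f - ε]) ++ g₂ ++ [f] ++ z) := by
          exact prod_swap hn hM cs (a := f) (x := x ++ g₁ ++ [f, f - ε]) (mid := g₂)
            (z := z) hg₂'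
        have hG2 : Good cs w ((x ++ g₁) ++ [f, f - ε, f] ++ (g₂ ++ z)) := by
          refine hG.transfer cs ?_ ?_
          · rw [show (x ++ g₁) ++ [f, f - ε, f] ++ (g₂ ++ z)
                = (x ++ g₁ ++ [f, f - ε]) ++ [f] ++ g₂ ++ z by simp [List.append_assoc]]
            rw [e2]
            rw [show (x ++ g₁ ++ [f, f - ε]) ++ g₂ ++ [f] ++ z
                = x ++ g₁ ++ [f] ++ ((f - ε) :: g₂ ++ [f] ++ z) by simp [List.append_assoc]]
            rw [← e1]
          · simp only [List.length_append, List.length_cons, List.length_nil]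
            omega
        exact hw _ hG2.1 hG2.2 ⟨x ++ g₁, g₂ ++ z, f, f - ε, by
          constructor
          · rw [M_eq_three_iff hn hM]
            rcases hε with rfl | rfl
            · left; ring
            · right; ring
          · rfl⟩
    · -- no f - ε at all: all of g commutes with f
      refine no_twin hn hM cs hG ?_
      intro y hy hsim
      rcases hset y hsim with rfl | rfl | rfl
      · exact hf1 hy
      · exact hf2 hy
      · exact hm hy

end words

end FG

namespace FG

section star

variable {n : ℕ} {W : Type*} {M : CoxeterMatrix (ZMod n)} [Group W]
variable (hn : 3 ≤ n) (hM : IsAffineAMatrix n M) (cs : CoxeterSystem M W) {w : W}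

/-- a reduced word starting with a noncommuting pair gives case (iii) -/
lemma star_left (hw : FullyCommutative cs w) {i j : ZMod n} {τ : List (ZMod n)}
    (hG : Good cs w ([i, j] ++ τ)) (h3 : M i j = 3) :
    ∃ (i' j' : ZMod n) (v : W), M i' j' = 3 ∧
      ¬ cs.IsLeftDescent v i' ∧ ¬ cs.IsLeftDescent v j' ∧
      w = cs.simple i' * cs.simple j' * v ∧ cs.length w = cs.length v + 2 := by
  set v := cs.wordProd τ with hv
  have hτred : cs.IsReduced τ := by
    have := hG.1.drop 2
    simpa using this
  have hτlen : cs.length v = τ.length := hτred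
  have hwlen : cs.length w = τ.length + 2 := by
    have := hG.1
    unfold CoxeterSystem.IsReduced at this
    rw [hG.2] at this
    simpa using this
  have hprod : w = cs.simple i * cs.simple j * v := by
    rw [← hG.2]
    show cs.wordProd (i :: j :: τ) = _
    rw [cs.wordProd_cons, cs.wordProd_cons, mul_assoc]
  refine ⟨i, j, v, h3, ?_, ?_, hprod, by omega⟩
  · -- not a left descent at i
    intro hd
    unfold CoxeterSystem.IsLeftDescent at hd
    rw [hτlen] at hd
    obtain ⟨ρ, hρred, hρ⟩ := cs.exists_reduced_word' (cs.simple i * v)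
    have hρlen : ρ.length = cs.length (cs.simple i * v) := by
      have := hρred
      unfold CoxeterSystem.IsReduced at this
      rw [← hρ] at this
      omega
    have hπ : cs.wordProd ([i, j, i] ++ ρ) = w := by
      rw [cs.wordProd_append, ← hρ]
      simp only [cs.wordProd_cons, cs.wordProd_nil, mul_one]
      rw [← mul_assoc (cs.simple i), mul_assoc (cs.simple i * cs.simple j),
        cs.simple_mul_simple_cancel_left, hprod]
    have hle := cs.length_wordProd_le ([i, j, i] ++ ρ)
    rw [hπ] at hle
    have hlen : ([i, j, i] ++ ρ).length = τ.length + 2 := by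
      simp only [List.length_append, List.length_cons, List.length_nil] at hle ⊢
      omega
    have hred2 : cs.IsReduced ([i, j, i] ++ ρ) := by
      unfold CoxeterSystem.IsReduced
      rw [hπ, hlen, hwlen]
    exact hw _ hred2 hπ ⟨[], ρ, i, j, h3, rfl⟩
  · -- not a left descent at j
    intro hd
    unfold CoxeterSystem.IsLeftDescent at hd
    have heq : cs.simple j * v = cs.wordProd (j :: τ) := by rw [cs.wordProd_cons]
    have hred : cs.IsReduced (j :: τ) := by
      have := hG.1.drop 1
      simpa using this
    have : cs.length (cs.simple j * v) = τ.length + 1 := by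
      rw [heq]
      have := hred
      unfold CoxeterSystem.IsReduced at this
      simpa using this
    omega

/-- a reduced word ending with a noncommuting pair gives case (iv) -/
lemma star_right (hw : FullyCommutative cs w) {a b : ZMod n} {τ : List (ZMod n)}
    (hG : Good cs w (τ ++ [a, b])) (h3 : M b a = 3) :
    ∃ (i' j' : ZMod n) (v : W), M i' j' = 3 ∧
      ¬ cs.IsRightDescent v i' ∧ ¬ cs.IsRightDescent v j' ∧
      w = v * cs.simple j' * cs.simple i' ∧ cs.length w = cs.length v + 2 := by
  set v := cs.wordProd τ with hv
  have hτred : cs.IsReduced τ := by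
    have := hG.1.take τ.length
    simpa using this
  have hτlen : cs.length v = τ.length := hτred
  have hwlen : cs.length w = τ.length + 2 := by
    have := hG.1
    unfold CoxeterSystem.IsReduced at this
    rw [hG.2] at this
    simp only [List.length_append, List.length_cons, List.length_nil] at this
    omega
  have hprod : w = v * cs.simple a * cs.simple b := by
    rw [← hG.2, cs.wordProd_append]
    simp only [cs.wordProd_cons, cs.wordProd_nil, mul_one]
    rw [← mul_assoc]
  refine ⟨b, a, v, h3, ?_, ?_, hprod, by omega⟩
  · -- not a right descent at b
    intro hd
    unfold CoxeterSystem.IsRightDescent at hd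
    rw [hτlen] at hd
    obtain ⟨ρ, hρred, hρ⟩ := cs.exists_reduced_word' (v * cs.simple b)
    have hρlen : ρ.length = cs.length (v * cs.simple b) := by
      have := hρred
      unfold CoxeterSystem.IsReduced at this
      rw [← hρ] at this
      omega
    have hπ : cs.wordProd (ρ ++ [b, a, b]) = w := by
      rw [cs.wordProd_append, ← hρ]
      simp only [cs.wordProd_cons, cs.wordProd_nil, mul_one]
      rw [hprod]
      rw [show cs.simple b * (cs.simple a * cs.simple b)
          = cs.simple b * cs.simple a * cs.simple b by rw [mul_assoc]]
      rw [show v * cs.simple b * (cs.simple b * cs.simple a * cs.simple b)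
          = v * (cs.simple b * cs.simple b) * cs.simple a * cs.simple b by group]
      rw [cs.simple_mul_simple_self]
      group
    have hle := cs.length_wordProd_le (ρ ++ [b, a, b])
    rw [hπ] at hle
    have hlen : (ρ ++ [b, a, b]).length = τ.length + 2 := by
      simp only [List.length_append, List.length_cons, List.length_nil] at hle ⊢
      omega
    have hred2 : cs.IsReduced (ρ ++ [b, a, b]) := by
      unfold CoxeterSystem.IsReduced
      rw [hπ, hlen, hwlen]
    exact hw _ hred2 hπ ⟨ρ, [], b, a, h3, by simp⟩
  · -- not a right descent at a
    intro hd
    unfold CoxeterSystem.IsRightDescent at hd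
    have heq : v * cs.simple a = cs.wordProd (τ ++ [a]) := by
      rw [cs.wordProd_append]
      simp [cs.wordProd_cons, hv]
    have hred : cs.IsReduced (τ ++ [a]) := by
      have := hG.1.take (τ.length + 1)
      rw [show (τ ++ [a, b]).take (τ.length + 1) = τ ++ [a] by
        rw [show τ ++ [a, b] = (τ ++ [a]) ++ [b] by simp]
        rw [List.take_append_of_le_length (by simp)]
        simp] at this
      exact this
    have : cs.length (v * cs.simple a) = τ.length + 1 := by
      rw [heq]
      have := hred
      unfold CoxeterSystem.IsReduced at this
      simp only [List.length_append, List.length_cons, List.length_nil] at this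
      omega
    omega

end star

end FG

namespace FG

section parity

variable {n : ℕ}

lemma val_add_one_mod_two (hn : 3 ≤ n) (hev : Even n) (x : ZMod n) :
    (x + 1).val % 2 = (x.val + 1) % 2 := by
  haveI : NeZero n := ⟨by omega⟩
  haveI : Fact (1 < n) := ⟨by omega⟩
  rw [ZMod.val_add, ZMod.val_one]
  have hx : x.val < n := ZMod.val_lt x
  rcases lt_or_eq_of_le (Nat.succ_le_of_lt hx) with h | h
  · rw [Nat.mod_eq_of_lt (by omega : x.val + 1 < n)]
  · rw [show x.val + 1 = n by omega, Nat.mod_self]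
    obtain ⟨m, rfl⟩ := hev
    omega

lemma val_sub_one_mod_two (hn : 3 ≤ n) (hev : Even n) (x : ZMod n) :
    x.val % 2 = ((x - 1).val + 1) % 2 := by
  have := val_add_one_mod_two hn hev (x - 1)
  rw [sub_add_cancel] at this
  omega

lemma exists_two_mul_nat (hn : 3 ≤ n) (hev : Even n) {x e : ZMod n}
    (h : x.val % 2 = e.val % 2) : ∃ m : ℕ, x = e + 2 * (m : ZMod n) := by
  haveI : NeZero n := ⟨by omega⟩
  set d := (x - e).val with hd
  have hxe : e + (x - e) = x := by ring
  have hval : ((x - e) + e).val = (d + e.val) % n := ZMod.val_add _ _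
  rw [show (x - e) + e = x by ring] at hval
  have hdlt : d < n := ZMod.val_lt _
  have helt : e.val < n := ZMod.val_lt _
  have hxlt : x.val < n := ZMod.val_lt _
  have hcases : d + e.val = x.val ∨ d + e.val = x.val + n := by
    rcases Nat.lt_or_ge (d + e.val) n with hlt | hge
    · left; rw [hval, Nat.mod_eq_of_lt hlt]
    · right
      have h2 : d + e.val - n < n := by omega
      have h3 : (d + e.val) % n = d + e.val - n := by
        rw [Nat.mod_eq_sub_mod hge, Nat.mod_eq_of_lt h2]
      omega
  have hdeven : d % 2 = 0 := by
    obtain ⟨m, rfl⟩ := hev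
    omega
  obtain ⟨m, hm⟩ := Nat.even_iff.mpr hdeven
  refine ⟨m, ?_⟩
  have : x - e = ((d : ℕ) : ZMod n) := (ZMod.natCast_rightInverse (x - e)).symm
  rw [← hxe, this, hm]
  push_cast
  ring

lemma exists_two_mul_eq_one_of_odd (hn : 3 ≤ n) (hodd : Odd n) :
    ∃ m : ℕ, (2 * (m : ZMod n)) = 1 := by
  obtain ⟨k, hk⟩ := hodd
  refine ⟨k + 1, ?_⟩
  have h1 : ((2 * (k + 1) : ℕ) : ZMod n) = 2 * ((k + 1 : ℕ) : ZMod n) := by push_cast; ring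
  have h2 : (2 * (k + 1) : ℕ) = n + 1 := by omega
  rw [← h1, h2]
  push_cast
  rw [ZMod.natCast_self]
  ring

end parity

end FG

namespace FG

section classes

variable {n : ℕ} {W : Type*} {M : CoxeterMatrix (ZMod n)} [Group W]

lemma nodup_of_pairwise {E : List (ZMod n)} (h : E.Pairwise (fun u v => ¬ sim u v)) :
    E.Nodup :=
  h.imp (fun {a b} hs => fun (heq : a = b) => absurd (heq ▸ sim_refl a) hs)

lemma pairwise_not_sim_forall {E : List (ZMod n)} (h : E.Pairwise (fun u v => ¬ sim u v))
    {x y : ZMod n} (hx : x ∈ E) (hy : y ∈ E) (hne : x ≠ y) : ¬ sim x y :=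
  haveI : Std.Symm (fun u v : ZMod n => ¬ sim u v) := ⟨sim_symmetric⟩
  List.Pairwise.forall h hx hy hne

lemma mem_iprod_list (hn : 3 ≤ n) (b : Bool) (x : ZMod n) :
    x ∈ ((List.range n).filter (fun k => k % 2 = b.toNat)).map
      (Nat.cast : ℕ → ZMod n) ↔ x.val % 2 = b.toNat := by
  haveI : NeZero n := ⟨by omega⟩
  constructor
  · intro hx
    obtain ⟨k, hk, rfl⟩ := List.mem_map.mp hx
    simp only [List.mem_filter, List.mem_range, decide_eq_true_eq] at hk
    rw [ZMod.val_cast_of_lt hk.1]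
    exact hk.2
  · intro hx
    refine List.mem_map.mpr ⟨x.val, ?_, ZMod.natCast_rightInverse x⟩
    simp only [List.mem_filter, List.mem_range, decide_eq_true_eq]
    exact ⟨ZMod.val_lt x, hx⟩

lemma iprod_eq (hn : 3 ≤ n) (hM : IsAffineAMatrix n M) (cs : CoxeterSystem M W) (b : Bool)
    {E : List (ZMod n)} (hpw : E.Pairwise (fun u v => ¬ sim u v))
    (hiff : ∀ x : ZMod n, x ∈ E ↔ x.val % 2 = b.toNat) :
    cs.wordProd E = Iprod cs b := by
  haveI : NeZero n := ⟨by omega⟩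
  set L := ((List.range n).filter (fun k => k % 2 = b.toNat)).map
    (Nat.cast : ℕ → ZMod n) with hL
  have hnodupL : L.Nodup := by
    refine List.Nodup.map_on ?_ ((List.nodup_range (n := n)).filter _)
    intro a ha c hc hac
    simp only [List.mem_filter, List.mem_range] at ha hc
    have : (a : ZMod n).val = (c : ZMod n).val := by rw [hac]
    rwa [ZMod.val_cast_of_lt ha.1, ZMod.val_cast_of_lt hc.1] at this
  have hperm : E.Perm L := by
    rw [List.perm_ext_iff_of_nodup (nodup_of_pairwise hpw) hnodupL]
    intro a
    rw [hiff a, mem_iprod_list hn b a]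
  show (E.map cs.simple).prod = Iprod cs b
  have : Iprod cs b = (L.map cs.simple).prod := rfl
  rw [this]
  refine List.Perm.prod_eq' (hperm.map cs.simple) ?_
  refine List.Pairwise.map cs.simple ?_ hpw
  intro a c hac
  exact commute_of_not_sim hn hM cs hac

lemma wrap_class (hn : 3 ≤ n) (hev : Even n) {E minL : List (ZMod n)} {b : Bool}
    (hpw : E.Pairwise (fun u v => ¬ sim u v))
    (hI2 : ∀ f ∈ minL, (f - 1) ∈ E ∧ (f + 1) ∈ E)
    (hmin : ∀ x : ZMod n, x ∈ minL ↔ x.val % 2 = b.toNat) :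
    ∀ x : ZMod n, x ∈ E ↔ x.val % 2 = (!b).toNat := by
  have hbn : b.toNat + (!b).toNat = 1 := by cases b <;> simp
  have hb1 : b.toNat ≤ 1 := by cases b <;> simp
  have hsup : ∀ x : ZMod n, x.val % 2 = (!b).toNat → x ∈ E := by
    intro x hx
    have hsub := val_sub_one_mod_two hn hev x
    have hmod := Nat.mod_two_eq_zero_or_one (x - 1).val
    have h1 : (x - 1).val % 2 = b.toNat := by omega
    have h2 := (hI2 _ ((hmin _).mpr h1)).2
    rwa [sub_add_cancel] at h2
  intro x
  constructor
  · intro hx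
    by_contra hpar
    have hmodx := Nat.mod_two_eq_zero_or_one x.val
    have hxpar : x.val % 2 = b.toNat := by omega
    have hadd := val_add_one_mod_two hn hev x
    have h1 : (x + 1).val % 2 = (!b).toNat := by omega
    have hx1 : x + 1 ∈ E := hsup _ h1
    exact pairwise_not_sim_forall hpw hx hx1 (ne_add_one hn x) (Or.inr (Or.inr rfl))
  · exact hsup x

end classes

end FG

namespace FG

section core

variable {n : ℕ} {W : Type*} {M : CoxeterMatrix (ZMod n)} [Group W]
variable (hn : 3 ≤ n) (hM : IsAffineAMatrix n M) (cs : CoxeterSystem M W) (w : W)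

/-- cases (iii) and (iv) of the main theorem -/
def Cases34 : Prop :=
    (∃ (i j : ZMod n) (v : W), M i j = 3 ∧
        ¬ cs.IsLeftDescent v i ∧ ¬ cs.IsLeftDescent v j ∧
        w = cs.simple i * cs.simple j * v ∧ cs.length w = cs.length v + 2) ∨
    (∃ (i j : ZMod n) (v : W), M i j = 3 ∧
        ¬ cs.IsRightDescent v i ∧ ¬ cs.IsRightDescent v j ∧
        w = v * cs.simple j * cs.simple i ∧ cs.length w = cs.length v + 2)

lemma not_mem_parts {α : Type*} {x : α} {A B : List α} (h : (A ++ x :: B).Nodup) :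
    x ∉ A ∧ x ∉ B := by
  rw [List.nodup_append'] at h
  obtain ⟨h1, h2, h3⟩ := h
  have hx := List.nodup_cons.mp h2
  exact ⟨fun hA => h3 hA (List.mem_cons_self), hx.1⟩

include hn hM

lemma core (hw : FullyCommutative cs w) :
    ∀ (fuel : ℕ) (P E ω : List (ZMod n)), ω.length ≤ fuel → ω ≠ [] →
    Good cs w (P ++ E ++ ω) →
    E.Pairwise (fun u v => ¬ sim u v) →
    (∀ f ∈ (splitM [] ω).1, (f - 1) ∈ E ∧ (f + 1) ∈ E) →
    Cases34 cs w ∨ (∃ (b : Bool) (k : ℕ), 1 ≤ k ∧ Even n ∧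
      cs.wordProd ω = altProd cs b k ∧
      ∀ x : ZMod n, x ∈ (splitM [] ω).1 ↔ x.val % 2 = b.toNat) := by
  intro fuel
  induction fuel with
  | zero =>
    intro P E ω hlen hne _ _ _
    exact absurd (List.length_eq_zero_iff.mp (Nat.le_zero.mp hlen)) hne
  | succ fuel ih =>
    intro P E ω hlen hne hG hpwE hI2
    set E' := (splitM [] ω).1 with hE'
    set r' := (splitM [] ω).2 with hr'
    have hpwE' : E'.Pairwise (fun u v => ¬ sim u v) := splitM_pairwise ω []
    have hE'ne : E' ≠ [] := splitM_ne_nil hne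
    have hsplen := splitM_len ω ([] : List (ZMod n))
    rw [← hE', ← hr'] at hsplen
    have hπsplit := splitM_prod hn hM cs ω [] (P ++ E)
    have hGsplit : Good cs w (P ++ E ++ E' ++ r') := by
      refine hG.transfer cs ?_ ?_
      · rw [show P ++ E ++ E' ++ r' = (P ++ E) ++ E' ++ r' by simp [List.append_assoc]]
        rw [← hπsplit]
      · simp only [List.length_append]
        omega
    by_cases hrnil : r' = []
    · -- ω is a single layer E'
      by_cases hcl : ∀ x ∈ E', x + 2 ∈ E'
      · -- closed under +2
        obtain ⟨e₀, he₀⟩ := List.exists_mem_of_ne_nil _ hE'ne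
        have hall : ∀ m : ℕ, e₀ + 2 * (m : ZMod n) ∈ E' := by
          intro m
          induction m with
          | zero => simpa using he₀
          | succ m ihm =>
            have := hcl _ ihm
            rw [show e₀ + 2 * ((m : ZMod n)) + 2 = e₀ + 2 * (((m+1 : ℕ)) : ZMod n) by
              push_cast; ring] at this
            exact this
        rcases Nat.even_or_odd n with hev | hodd
        · right
          set b : Bool := decide (e₀.val % 2 = 1) with hb
          have hbt : b.toNat = e₀.val % 2 := by
            rcases Nat.mod_two_eq_zero_or_one e₀.val with h | h <;> simp [hb, h]
          have hsup : ∀ x : ZMod n, x.val % 2 = e₀.val % 2 → x ∈ E' := by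
            intro x hx
            obtain ⟨m, hm⟩ := exists_two_mul_nat hn hev hx
            rw [hm]; exact hall m
          have hiff : ∀ x : ZMod n, x ∈ E' ↔ x.val % 2 = b.toNat := by
            intro x
            rw [hbt]
            constructor
            · intro hx
              by_contra hpar
              have hadd := val_add_one_mod_two hn hev x
              have hmod := Nat.mod_two_eq_zero_or_one x.val
              have hmod0 := Nat.mod_two_eq_zero_or_one e₀.val
              have hpar1 : (x+1).val % 2 = e₀.val % 2 := by omega
              have hx1 : x + 1 ∈ E' := hsup _ hpar1
              exact pairwise_not_sim_forall hpwE' hx hx1 (ne_add_one hn x)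
                (Or.inr (Or.inr rfl))
            · exact hsup x
          have hπE : cs.wordProd ω = cs.wordProd E' := by
            have := splitM_prod hn hM cs ω [] []
            rw [← hE', ← hr', hrnil] at this
            simpa using this
          refine ⟨b, 1, le_refl 1, hev, ?_, hiff⟩
          rw [hπE, iprod_eq hn hM cs b hpwE' hiff]
          show Iprod cs b = altProd cs b 1
          show Iprod cs b = Iprod cs b * altProd cs (!b) 0
          show Iprod cs b = Iprod cs b * 1
          rw [mul_one]
        · -- n odd: impossible
          exfalso
          obtain ⟨m, hm⟩ := exists_two_mul_eq_one_of_odd hn hodd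
          have h1 : e₀ + 1 ∈ E' := by
            have := hall m
            rwa [hm] at this
          exact pairwise_not_sim_forall hpwE' he₀ h1 (ne_add_one hn e₀)
            (Or.inr (Or.inr rfl))
      · -- not closed: produce case (iv)
        push_neg at hcl
        obtain ⟨e', he', hnot⟩ := hcl
        set x := e' + 1 with hxdef
        have hxE : x ∈ E := (hI2 e' he').2
        have hxE' : x ∉ E' := by
          intro hmem
          exact pairwise_not_sim_forall hpwE' he' hmem (ne_add_one hn e')
            (Or.inr (Or.inr rfl))
        obtain ⟨A, B, hEeq, _⟩ := exists_mem_split_first hxE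
        have hxAB := not_mem_parts (hEeq ▸ nodup_of_pairwise hpwE)
        obtain ⟨F₁, F₂, hE'eq, _⟩ := exists_mem_split_first he'
        have he'F := not_mem_parts (hE'eq ▸ nodup_of_pairwise hpwE')
        have hG0 : Good cs w (P ++ E ++ E') := by
          refine hGsplit.transfer cs ?_ ?_ <;> rw [hrnil] <;> simp
        have cond1 : ∀ y ∈ F₂, ¬ sim e' y := by
          intro y hy
          refine pairwise_not_sim_forall hpwE' he' ?_ ?_
          · rw [hE'eq]; simp [hy]
          · intro hc; exact he'F.2 (hc ▸ hy)
        have cond2 : ∀ y ∈ B ++ F₁ ++ F₂, ¬ sim x y := by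
          intro y hy hsim
          simp only [List.mem_append] at hy
          rcases hy with (hy | hy) | hy
          · -- y ∈ B ⊆ E
            have hyE : y ∈ E := by rw [hEeq]; simp [hy]
            have hyne : x ≠ y := fun hc => hxAB.2 (hc ▸ hy)
            exact pairwise_not_sim_forall hpwE hxE hyE hyne hsim
          all_goals {
            have hyE' : y ∈ E' := by rw [hE'eq]; simp [hy]
            rcases hsim with hc | hc | hc
            · exact hxE' (by rw [hc]; exact hyE')
            · -- x = y + 1, so y = e'
              have hy_e : y = e' := by
                have h5 : y + 1 = e' + 1 := by rw [← hc, hxdef]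
                exact add_left_injective 1 h5
              rw [hy_e] at hy
              first
              | exact he'F.1 hy
              | exact he'F.2 hy
            · -- y = x + 1 = e' + 2
              rw [hc, hxdef, show e' + 1 + 1 = e' + 2 by ring] at hyE'
              exact hnot hyE' }
        -- assemble the rearranged word
        have sw1 := prod_swap hn hM cs (a := e') (x := P ++ E ++ F₁) (mid := F₂)
          (z := []) cond1
        have sw2 := prod_swap hn hM cs (a := x) (x := P ++ A) (mid := B ++ F₁ ++ F₂)
          (z := [e']) cond2
        have hfinal : Good cs w (((P ++ A) ++ (B ++ F₁ ++ F₂)) ++ [x, e']) := by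
          refine hG0.transfer cs ?_ ?_
          · calc cs.wordProd (((P ++ A) ++ (B ++ F₁ ++ F₂)) ++ [x, e'])
                = cs.wordProd ((P ++ A) ++ (B ++ F₁ ++ F₂) ++ [x] ++ [e']) := by
                  simp [List.append_assoc]
              _ = cs.wordProd ((P ++ A) ++ [x] ++ (B ++ F₁ ++ F₂) ++ [e']) := sw2.symm
              _ = cs.wordProd ((P ++ E ++ F₁) ++ F₂ ++ [e'] ++ []) := by
                  rw [hEeq]; simp [List.append_assoc]
              _ = cs.wordProd ((P ++ E ++ F₁) ++ [e'] ++ F₂ ++ []) := sw1.symm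
              _ = cs.wordProd (P ++ E ++ E') := by
                  rw [hE'eq]; simp [List.append_assoc]
          · rw [hEeq, hE'eq]
            simp only [List.length_append, List.length_cons, List.length_nil]
            omega
        have h3 : M e' x = 3 := by
          rw [M_eq_three_iff hn hM]
          right
          rw [hxdef]
        exact Or.inl (Or.inr (star_right cs hw hfinal h3))
    · -- r' nonempty: recurse
      have hI2' : ∀ f ∈ (splitM [] r').1, (f - 1) ∈ E' ∧ (f + 1) ∈ E' := by
        intro f hf
        obtain ⟨s, hs, hsim⟩ := splitM_blocker ω [] f hf
        have hsE' : s ∈ E' := by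
          rcases hs with h | h
          · simp at h
          · exact h
        obtain ⟨C, D, hreq, hC, _⟩ := splitM_min_decomp r' [] f hf
        by_cases hfE' : f ∈ E'
        · exfalso
          obtain ⟨A, B, hE'eq, _⟩ := exists_mem_split_first hfE'
          have hfAB := not_mem_parts (hE'eq ▸ nodup_of_pairwise hpwE')
          refine no_twin hn hM cs (w := w) (f := f) (x := P ++ E ++ A) (g := B ++ C)
            (z := D) ?_ ?_
          · have heq : P ++ E ++ E' ++ r'
                = (P ++ E ++ A) ++ [f] ++ (B ++ C) ++ [f] ++ D := by
              rw [hE'eq, hreq]; simp [List.append_assoc]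
            exact heq ▸ hGsplit
          · intro y hy
            simp only [List.mem_append] at hy
            rcases hy with hy | hy
            · have hyE' : y ∈ E' := by rw [hE'eq]; simp [hy]
              have : f ≠ y := fun hc => hfAB.2 (hc ▸ hy)
              exact pairwise_not_sim_forall hpwE' hfE' hyE' this
            · intro hsimc
              exact hC y hy (sim_comm.mp hsimc)
        · have hsf : s ≠ f := fun h => hfE' (h ▸ hsE')
          have hfE : f ∈ E := by
            rcases hsim with h | h | h
            · exact absurd h hsf
            · have := (hI2 s hsE').1
              rw [h] at this
              simpa using this
            · have := (hI2 s hsE').2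
              rw [← h] at this
              exact this
          have hfp1 : f + 1 ∉ E := fun hmem =>
            pairwise_not_sim_forall hpwE hfE hmem (ne_add_one hn f)
              (Or.inr (Or.inr rfl))
          have hfm1 : f - 1 ∉ E := by
            intro hmem
            have hne : f - 1 ≠ f := by
              intro hc
              have := ne_add_one hn (f - 1)
              rw [sub_add_cancel] at this
              exact this hc
            exact pairwise_not_sim_forall hpwE hmem hfE hne
              (Or.inr (Or.inr (sub_add_cancel f 1).symm))
          obtain ⟨G, H, hEeq, _⟩ := exists_mem_split_first hfE
          have hfGH := not_mem_parts (hEeq ▸ nodup_of_pairwise hpwE)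
          have hgood2 : Good cs w ((P ++ G) ++ [f] ++ (H ++ E' ++ C) ++ [f] ++ D) := by
            have heq : P ++ E ++ E' ++ r'
                = (P ++ G) ++ [f] ++ (H ++ E' ++ C) ++ [f] ++ D := by
              rw [hEeq, hreq]; simp [List.append_assoc]
            exact heq ▸ hGsplit
          have hfnotg : f ∉ H ++ E' ++ C := by
            simp only [List.mem_append]
            push_neg
            exact ⟨⟨hfGH.2, hfE'⟩, fun hc => (hC f hc) (sim_refl f)⟩
          have hplus : f + 1 ∈ H ++ E' ++ C := by
            by_contra hcon
            exact neighbor_between hn hM cs hw (H ++ E' ++ C).length _ le_rfl _ _ f 1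
              (Or.inl rfl) hgood2 hfnotg hcon
          have hminus : f - 1 ∈ H ++ E' ++ C := by
            by_contra hcon
            refine neighbor_between hn hM cs hw (H ++ E' ++ C).length _ le_rfl _ _ f (-1)
              (Or.inr rfl) hgood2 hfnotg ?_
            rwa [show f + (-1) = f - 1 by ring]
          constructor
          · -- f - 1 ∈ E'
            simp only [List.mem_append] at hminus
            rcases hminus with (hy | hy) | hy
            · exact absurd (by rw [hEeq]; simp [hy] : f - 1 ∈ E) hfm1
            · exact hy
            · exfalso
              refine hC (f - 1) hy ?_
              exact Or.inr (Or.inr (sub_add_cancel f 1).symm)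
          · simp only [List.mem_append] at hplus
            rcases hplus with (hy | hy) | hy
            · exact absurd (by rw [hEeq]; simp [hy] : f + 1 ∈ E) hfp1
            · exact hy
            · exfalso
              exact hC (f + 1) hy (Or.inr (Or.inl rfl))
      have hlenr' : r'.length ≤ fuel := by
        have hpos : 0 < E'.length := List.length_pos_iff.mpr hE'ne
        omega
      have hGassoc : Good cs w ((P ++ E) ++ E' ++ r') := by
        have heq : P ++ E ++ E' ++ r' = (P ++ E) ++ E' ++ r' := by
          simp [List.append_assoc]
        exact heq ▸ hGsplit
      rcases ih (P ++ E) E' r' hlenr' hrnil hGassoc hpwE' hI2' with hc | ⟨b, k, hk, hev, hπr, hminr⟩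
      · exact Or.inl hc
      · right
        have hE'class : ∀ x : ZMod n, x ∈ E' ↔ x.val % 2 = (!b).toNat :=
          wrap_class hn hev hpwE' hI2' hminr
        refine ⟨!b, k + 1, by omega, hev, ?_, hE'class⟩
        have hπω : cs.wordProd ω = cs.wordProd E' * cs.wordProd r' := by
          have := splitM_prod hn hM cs ω [] []
          rw [← hE', ← hr'] at this
          simp only [List.nil_append] at this
          rw [this, cs.wordProd_append]
        rw [hπω, hπr, iprod_eq hn hM cs (!b) hpwE' hE'class]
        show Iprod cs (!b) * altProd cs b k = Iprod cs (!b) * altProd cs (!(!b)) k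
        rw [Bool.not_not]

end core

end FG

namespace FG

section construct

variable {n : ℕ} {W : Type*} {M : CoxeterMatrix (ZMod n)} [Group W]
variable (hn : 3 ≤ n) (hM : IsAffineAMatrix n M) (cs : CoxeterSystem M W) {w : W}

include hn hM

/-- bubble a noncommuting pair to the front of a reduced word, producing case (iii) -/
lemma star_left_construct (hw : FullyCommutative cs w) {f x : ZMod n}
    {E₁ C D : List (ZMod n)}
    (hGs : Good cs w (E₁ ++ (C ++ f :: D)))
    (hpw : E₁.Pairwise (fun u v => ¬ sim u v))
    (hxE : x ∈ E₁) (hfE : f ∉ E₁)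
    (hC : ∀ y ∈ C, ¬ sim y f)
    (hother : ∀ y ∈ E₁, sim f y → y = x)
    (h3 : M x f = 3) :
    ∃ (i j : ZMod n) (v : W), M i j = 3 ∧
      ¬ cs.IsLeftDescent v i ∧ ¬ cs.IsLeftDescent v j ∧
      w = cs.simple i * cs.simple j * v ∧ cs.length w = cs.length v + 2 := by
  obtain ⟨A, B, hE₁eq, _⟩ := exists_mem_split_first hxE
  have hxAB := not_mem_parts (hE₁eq ▸ nodup_of_pairwise hpw)
  have cA : ∀ y ∈ A, ¬ sim x y := by
    intro y hy
    refine pairwise_not_sim_forall hpw hxE ?_ (fun hc => hxAB.1 (hc ▸ hy))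
    rw [hE₁eq]; simp [hy]
  have cf : ∀ y ∈ A ++ (B ++ C), ¬ sim f y := by
    intro y hy hsim
    simp only [List.mem_append] at hy
    rcases hy with hy | hy | hy
    · have hyE : y ∈ E₁ := by rw [hE₁eq]; simp [hy]
      exact hxAB.1 ((hother y hyE hsim) ▸ hy)
    · have hyE : y ∈ E₁ := by rw [hE₁eq]; simp [hy]
      exact hxAB.2 ((hother y hyE hsim) ▸ hy)
    · exact hC y hy (sim_comm.mp hsim)
  have cfA : ∀ y ∈ A, ¬ sim f y := fun y hy => cf y (by simp [hy])
  have cfBC : ∀ y ∈ B ++ C, ¬ sim f y := fun y hy => cf y (by simp only [List.mem_append] at hy ⊢; tauto)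
  have sw1 := prod_swap hn hM cs (a := f) (x := A ++ [x]) (mid := B ++ C) (z := D) cfBC
  have sw2 := prod_swap hn hM cs (a := x) (x := []) (mid := A)
    (z := [f] ++ (B ++ C) ++ D) cA
  have sw3 := prod_swap hn hM cs (a := f) (x := [x]) (mid := A)
    (z := (B ++ C) ++ D) cfA
  have hfinal : Good cs w ([x, f] ++ (A ++ (B ++ C) ++ D)) := by
    refine hGs.transfer cs ?_ ?_
    · calc cs.wordProd ([x, f] ++ (A ++ (B ++ C) ++ D))
          = cs.wordProd ([x] ++ [f] ++ A ++ ((B ++ C) ++ D)) := by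
            simp [List.append_assoc]
        _ = cs.wordProd ([x] ++ A ++ [f] ++ ((B ++ C) ++ D)) := sw3
        _ = cs.wordProd ([] ++ [x] ++ A ++ ([f] ++ (B ++ C) ++ D)) := by
            simp [List.append_assoc]
        _ = cs.wordProd ([] ++ A ++ [x] ++ ([f] ++ (B ++ C) ++ D)) := sw2
        _ = cs.wordProd ((A ++ [x]) ++ [f] ++ (B ++ C) ++ D) := by
            simp [List.append_assoc]
        _ = cs.wordProd ((A ++ [x]) ++ (B ++ C) ++ [f] ++ D) := sw1
        _ = cs.wordProd (E₁ ++ (C ++ f :: D)) := by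
            rw [hE₁eq]; simp [List.append_assoc]
    · rw [hE₁eq]
      simp only [List.length_append, List.length_cons, List.length_nil]
      omega
  exact star_left cs hw hfinal h3

end construct

end FG


/-- Fan–Green, Proposition 3.1.2: a nontrivial fully commutative element `w` of type
affine `A_{n-1}` is (i) a product of pairwise commuting distinct generators, or
(ii) `n` is even and `w` is an alternating product of `I₀` and `I₁`, or
(iii) `w = s t v` reduced with `m(s,t) = 3` and `v` a minimal coset representative
(so the left star operation `w ↦ tv` decreases length), or (iv) the right-handed
analogue `w = v t s`. -/
theorem fullyCommutative_four_cases
    {n : ℕ} (hn : 3 ≤ n) {W : Type*} {M : CoxeterMatrix (ZMod n)} [Group W]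
    (hM : IsAffineAMatrix n M) (cs : CoxeterSystem M W)
    (w : W) (hw : FullyCommutative cs w) (hne : w ≠ 1) :
    (∃ l : List (ZMod n), l.Nodup ∧
        (∀ i ∈ l, ∀ j ∈ l, Commute (cs.simple i) (cs.simple j)) ∧ w = cs.wordProd l) ∨
    (Even n ∧ ∃ (b : Bool) (k : ℕ), 1 ≤ k ∧ w = altProd cs b k) ∨
    (∃ (i j : ZMod n) (v : W), M i j = 3 ∧
        ¬ cs.IsLeftDescent v i ∧ ¬ cs.IsLeftDescent v j ∧
        w = cs.simple i * cs.simple j * v ∧ cs.length w = cs.length v + 2) ∨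
    (∃ (i j : ZMod n) (v : W), M i j = 3 ∧
        ¬ cs.IsRightDescent v i ∧ ¬ cs.IsRightDescent v j ∧
        w = v * cs.simple j * cs.simple i ∧ cs.length w = cs.length v + 2) := by
  classical
  obtain ⟨ω, hred, hπ⟩ := cs.exists_reduced_word' w
  have hGω : FG.Good cs w ω := ⟨hred, hπ.symm⟩
  have hωne : ω ≠ [] := by
    intro h
    rw [h] at hπ
    exact hne (by rw [hπ, cs.wordProd_nil])
  set E₁ := (FG.splitM [] ω).1 with hE₁
  set r := (FG.splitM [] ω).2 with hr
  have hpw : E₁.Pairwise (fun u v => ¬ FG.sim u v) := FG.splitM_pairwise ω []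
  have hsplen := FG.splitM_len ω ([] : List (ZMod n))
  rw [← hE₁, ← hr] at hsplen
  have hπs := FG.splitM_prod hn hM cs ω [] []
  rw [← hE₁, ← hr] at hπs
  simp only [List.nil_append] at hπs
  have hGs : FG.Good cs w (E₁ ++ r) := hGω.transfer cs hπs.symm
    (by simp only [List.length_append]; omega)
  by_cases hrnil : r = []
  · -- case (i)
    left
    refine ⟨E₁, FG.nodup_of_pairwise hpw, ?_, ?_⟩
    · intro i hi j hj
      by_cases hij : i = j
      · rw [hij]
      · exact FG.commute_of_not_sim hn hM cs (FG.pairwise_not_sim_forall hpw hi hj hij)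
    · rw [← hGs.2, hrnil]
      simp
  · by_cases hI2 : ∀ f ∈ (FG.splitM [] r).1, (f - 1) ∈ E₁ ∧ (f + 1) ∈ E₁
    · have hGcore : FG.Good cs w ([] ++ E₁ ++ r) := by simpa using hGs
      rcases FG.core hn hM cs w hw r.length [] E₁ r le_rfl hrnil hGcore hpw hI2 with
        hc | ⟨b, k, hk, hev, hπr, hminr⟩
      · rcases hc with h3 | h4
        · right; right; left; exact h3
        · right; right; right; exact h4
      · right; left
        refine ⟨hev, !b, k + 1, by omega, ?_⟩
        have hE₁class : ∀ x : ZMod n, x ∈ E₁ ↔ x.val % 2 = (!b).toNat :=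
          FG.wrap_class hn hev hpw hI2 hminr
        rw [← hGs.2, cs.wordProd_append, hπr, FG.iprod_eq hn hM cs (!b) hpw hE₁class]
        show Iprod cs (!b) * altProd cs b k = altProd cs (!b) (k + 1)
        show _ = Iprod cs (!b) * altProd cs (!(!b)) k
        rw [Bool.not_not]
    · -- produce case (iii)
      right; right; left
      push_neg at hI2
      obtain ⟨f, hf, hmiss⟩ := hI2
      obtain ⟨s, hs, hsim⟩ := FG.splitM_blocker ω [] f hf
      have hsE₁ : s ∈ E₁ := by
        rcases hs with h | h
        · simp at h
        · exact h
      obtain ⟨C, D, hreq, hC, _⟩ := FG.splitM_min_decomp r [] f hf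
      have hGs' : FG.Good cs w (E₁ ++ (C ++ f :: D)) := by
        rw [← hreq]; exact hGs
      by_cases hfE₁ : f ∈ E₁
      · exfalso
        obtain ⟨A, B, hE₁eq, _⟩ := FG.exists_mem_split_first hfE₁
        have hfAB := FG.not_mem_parts (hE₁eq ▸ FG.nodup_of_pairwise hpw)
        refine FG.no_twin hn hM cs (w := w) (f := f) (x := A) (g := B ++ C) (z := D)
          ?_ ?_
        · have heq : E₁ ++ (C ++ f :: D) = A ++ [f] ++ (B ++ C) ++ [f] ++ D := by
            rw [hE₁eq]; simp [List.append_assoc]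
          exact heq ▸ hGs'
        · intro y hy
          simp only [List.mem_append] at hy
          rcases hy with hy | hy
          · have hyE : y ∈ E₁ := by rw [hE₁eq]; simp [hy]
            exact FG.pairwise_not_sim_forall hpw hfE₁ hyE (fun hc => hfAB.2 (hc ▸ hy))
          · intro hsimc
            exact hC y hy (FG.sim_comm.mp hsimc)
      · have hsf : s ≠ f := fun h => hfE₁ (h ▸ hsE₁)
        have hfp1 : f - 1 ∈ E₁ → f + 1 ∈ E₁ → False := fun h1 h2 => hmiss h1 h2
        rcases hsim with h | h | h
        · exact absurd h hsf
        · -- s = f + 1 ∈ E₁; then f - 1 ∉ E₁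
          have hxE : f + 1 ∈ E₁ := by rw [← h]; exact hsE₁
          have hm1 : f - 1 ∉ E₁ := fun hc => hmiss hc hxE
          refine FG.star_left_construct hn hM cs hw hGs' hpw hxE hfE₁ hC ?_ ?_
          · intro y hy hsimy
            rcases hsimy with hc | hc | hc
            · exact absurd (hc ▸ hy) hfE₁
            · -- f = y + 1, y = f - 1
              exfalso
              apply hm1
              have : y = f - 1 := by rw [hc]; ring
              rw [← this]; exact hy
            · exact hc
          · rw [FG.M_eq_three_iff hn hM]
            left; rfl
        · -- f = s + 1, s = f - 1 ∈ E₁; then f + 1 ∉ E₁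
          have hxE : f - 1 ∈ E₁ := by
            have : s = f - 1 := by rw [h]; ring
            rw [← this]; exact hsE₁
          have hp1 : f + 1 ∉ E₁ := fun hc => hmiss hxE hc
          refine FG.star_left_construct hn hM cs hw hGs' hpw hxE hfE₁ hC ?_ ?_
          · intro y hy hsimy
            rcases hsimy with hc | hc | hc
            · exact absurd (hc ▸ hy) hfE₁
            · rw [hc]; ring
            · exact absurd (hc ▸ hy) hp1
          · rw [FG.M_eq_three_iff hn hM]
            right
            rw [sub_add_cancel]
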